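/- Conditional variance of the Ehrenfest process (Theorem 3.3(b)): for every i ∈ {0,1,…,N} and every t ≥ 0, Σ_{j=0}^{N} j² · p_{ij}(t) − (Σ_{j=0}^{N} j · p_{ij}(t))² = N·p·q + (2p−1)·(N·p − i)·e^{−λ(α+β)t} − [(N−i)·p² + i·q²]·e^{−2λ(α+β)t}. -/

import Mathlib

open Finset

/-- The Krawtchouk polynomial `K_l(x; N; p)`, defined via the hypergeometric sum. -/
noncomputable def krawtchouk (N : ℕ) (p : ℝ) (l x : ℕ) : ℝ :=
  ∑ k ∈ Finset.range (N + 1),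
    ((ascPochhammer ℝ k).eval (-(l : ℝ)) * (ascPochhammer ℝ k).eval (-(x : ℝ))) /
      ((ascPochhammer ℝ k).eval (-(N : ℝ)) * (Nat.factorial k : ℝ)) * (1 / p) ^ k

/-- Transition probabilities `p_{ij}(t)` of the continuous-time Ehrenfest process,
where `p = α/(α+β)` and `q = 1 - p`. -/
noncomputable def ehrenfestP (N : ℕ) (p q lam α β : ℝ) (i j : ℕ) (t : ℝ) : ℝ :=
  (N.choose j : ℝ) * (p / q) ^ j *
    ∑ x ∈ Finset.range (N + 1),
      (N.choose x : ℝ) * p ^ x * q ^ (N - x) * krawtchouk N p i x * krawtchouk N p j x *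
        Real.exp (-(lam * (α + β) * (x : ℝ) * t))

lemma poch_neg_nat (m k : ℕ) :
    (ascPochhammer ℝ k).eval (-(m : ℝ)) = (-1) ^ k * k.factorial * m.choose k := by
  induction k with
  | zero => simp
  | succ k ih =>
    rw [ascPochhammer_succ_eval, ih]
    rcases lt_or_ge m k with h | h
    · rw [Nat.choose_eq_zero_of_lt h, Nat.choose_eq_zero_of_lt (by omega)]
      simp
    · have hcast : ((m - k : ℕ) : ℝ) = (m : ℝ) - k := by
        push_cast [Nat.cast_sub h]; ring
      have hc := Nat.choose_succ_right_eq m k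
      have hc' : (m.choose (k+1) : ℝ) * (k+1) = (m.choose k : ℝ) * ((m:ℝ) - k) := by
        rw [← hcast]; exact_mod_cast congrArg (Nat.cast (R := ℝ)) hc
      have hfact : (Nat.factorial (k+1) : ℝ) = (k+1) * Nat.factorial k := by
        push_cast [Nat.factorial_succ]; ring
      rw [hfact]
      linear_combination ((-1:ℝ)^k * k.factorial) * hc'

lemma kraw_formula (N : ℕ) (p : ℝ) (hp : p ≠ 0) (l x : ℕ) :
    krawtchouk N p l x =
      ∑ k ∈ range (N+1), (-1:ℝ)^k * (l.choose k : ℝ) * (x.choose k : ℝ) / (N.choose k : ℝ) * (1/p)^k := by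
  unfold krawtchouk
  refine sum_congr rfl fun k hk => ?_
  have hkN : k ≤ N := by have := mem_range.mp hk; omega
  rw [poch_neg_nat, poch_neg_nat, poch_neg_nat]
  have h1 : (k.factorial : ℝ) ≠ 0 := by positivity
  have h2 : (N.choose k : ℝ) ≠ 0 := Nat.cast_ne_zero.mpr (Nat.choose_pos hkN).ne'
  have h3 : ((-1:ℝ))^k ≠ 0 := pow_ne_zero _ (by norm_num)
  field_simp

lemma sum_trunc (N m : ℕ) (F : ℕ → ℝ) (h1 : ∀ x, m ≤ x → x ≤ N → F x = 0)
    (h2 : ∀ x, N < x → F x = 0) :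
    ∑ x ∈ range (N+1), F x = ∑ x ∈ range m, F x := by
  rcases le_total m (N+1) with h | h
  · exact (sum_subset (range_subset_range.mpr h)
      (fun x hx hxm => h1 x (by simpa using hxm) (by have := mem_range.mp hx; omega))).symm
  · exact sum_subset (range_subset_range.mpr h)
      (fun x hx hxN => h2 x (by simpa using hxN))

lemma alt0 (N x : ℕ) (hx : x ≤ N) :
    ∑ k ∈ range (N+1), (-1:ℝ)^k * (x.choose k : ℝ) = if x = 0 then 1 else 0 := by
  have h : ∑ k ∈ range (x+1), (-1:ℝ)^k * (x.choose k : ℝ) = if x = 0 then 1 else 0 := by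
    have := Int.alternating_sum_range_choose (n := x)
    have h2 := congrArg (Int.cast (R := ℝ)) this
    push_cast at h2
    simpa using h2
  rw [← h]
  exact (sum_subset (range_subset_range.mpr (by omega))
    (fun k _ hk => by
      rw [Nat.choose_eq_zero_of_lt (by simpa using hk)]
      simp)).symm

lemma succ_choose_cast (n k : ℕ) :
    ((k:ℝ)+1) * ((n+1).choose (k+1) : ℝ) = ((n:ℝ)+1) * (n.choose k : ℝ) := by
  have := Nat.add_one_mul_choose_eq n k
  have h2 := congrArg (Nat.cast (R := ℝ)) this
  push_cast at h2
  linarith [h2]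

lemma alt1 (N x : ℕ) (hx : x ≤ N) :
    ∑ k ∈ range (N+1), (-1:ℝ)^k * (k:ℝ) * (x.choose k : ℝ) = if x = 1 then -1 else 0 := by
  cases x with
  | zero =>
    rw [if_neg (by omega)]
    refine sum_eq_zero fun k _ => ?_
    match k with
    | 0 => simp
    | (k+1) => rw [Nat.choose_eq_zero_of_lt (by omega)]; simp
  | succ x' =>
    match N, hx with
    | (N'+1), hx =>
      have e1 : ∀ k ∈ range (N'+1),
          (-1:ℝ)^(k+1) * ((k+1 : ℕ):ℝ) * (((x'+1).choose (k+1) : ℕ) : ℝ)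
            = (-((x':ℝ)+1)) * ((-1:ℝ)^k * (x'.choose k : ℝ)) := by
        intro k _
        have h := succ_choose_cast x' k
        push_cast
        linear_combination ((-1:ℝ)^(k+1)) * h
      rw [Finset.sum_range_succ', sum_congr rfl e1, ← mul_sum, alt0 N' x' (by omega)]
      rcases Nat.eq_zero_or_pos x' with h | h
      · subst h; norm_num
      · rw [if_neg (by omega), if_neg (by omega)]; norm_num

lemma alt2 (N x : ℕ) (hx : x ≤ N) :
    ∑ k ∈ range (N+1), (-1:ℝ)^k * ((k:ℝ) * ((k:ℝ)-1)) * (x.choose k : ℝ)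
      = if x = 2 then 2 else 0 := by
  match x, hx with
  | 0, hx =>
    rw [if_neg (by omega)]
    refine sum_eq_zero fun k _ => ?_
    match k with
    | 0 => simp
    | (k+1) => rw [Nat.choose_eq_zero_of_lt (by omega)]; simp
  | 1, hx =>
    rw [if_neg (by omega)]
    refine sum_eq_zero fun k _ => ?_
    match k with
    | 0 => simp
    | 1 => norm_num
    | (k+2) => rw [Nat.choose_eq_zero_of_lt (by omega)]; simp
  | (x''+2), hx =>
    match N, hx with
    | (N''+2), hx =>
      have e1 : ∀ k ∈ range (N''+1),
          (-1:ℝ)^(k+1+1) * (((k+1+1 : ℕ):ℝ) * (((k+1+1 : ℕ):ℝ)-1)) * (((x''+2).choose (k+1+1) : ℕ) : ℝ)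
            = (((x'':ℝ)+2)*((x'':ℝ)+1)) * ((-1:ℝ)^k * (x''.choose k : ℝ)) := by
        intro k _
        have h1 := succ_choose_cast (x''+1) (k+1)
        have h2 := succ_choose_cast x'' k
        push_cast at h1 h2
        have expand : ((k:ℝ)+2)*((k:ℝ)+1) * (((x''+2).choose (k+2) : ℕ) : ℝ)
            = ((x'':ℝ)+2)*((x'':ℝ)+1) * (x''.choose k : ℝ) := by
          push_cast
          linear_combination ((k:ℝ)+1)*h1 + ((x'':ℝ)+2)*h2
        push_cast
        push_cast at expand
        linear_combination ((-1:ℝ)^(k+1+1)) * expand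
      rw [Finset.sum_range_succ', Finset.sum_range_succ', sum_congr rfl e1, ← mul_sum,
        alt0 N'' x'' (by omega)]
      rcases Nat.eq_zero_or_pos x'' with h | h
      · subst h; norm_num
      · rw [if_neg (by omega), if_neg (by omega)]; norm_num

lemma B0 (n : ℕ) (w : ℝ) : ∑ r ∈ range (n+1), (n.choose r : ℝ) * w ^ r = (1+w)^n := by
  rw [add_comm 1 w, add_pow w 1 n]
  exact sum_congr rfl fun r _ => by ring

lemma B1 (n : ℕ) (w : ℝ) :
    ∑ r ∈ range (n+1), (r:ℝ) * (n.choose r : ℝ) * w ^ r = (n:ℝ) * w * (1+w)^(n-1) := by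
  cases n with
  | zero => simp
  | succ n' =>
    have e1 : ∀ r ∈ range (n'+1),
        ((r+1 : ℕ):ℝ) * (((n'+1).choose (r+1) : ℕ):ℝ) * w ^ (r+1)
          = (((n':ℝ)+1) * w) * ((n'.choose r : ℝ) * w ^ r) := by
      intro r _
      have h := succ_choose_cast n' r
      push_cast
      linear_combination (w^(r+1)) * h
    rw [Finset.sum_range_succ', sum_congr rfl e1, ← mul_sum, B0]
    push_cast
    ring

lemma B2 (n : ℕ) (w : ℝ) :
    ∑ r ∈ range (n+1), ((r:ℝ) * ((r:ℝ)-1)) * (n.choose r : ℝ) * w ^ r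
      = (n:ℝ) * ((n:ℝ)-1) * w^2 * (1+w)^(n-2) := by
  match n with
  | 0 => norm_num
  | 1 => norm_num [Finset.sum_range_succ]
  | (n''+2) =>
    have e1 : ∀ r ∈ range (n''+1),
        (((r+1+1 : ℕ):ℝ) * (((r+1+1 : ℕ):ℝ)-1)) * (((n''+2).choose (r+1+1) : ℕ):ℝ) * w ^ (r+1+1)
          = ((((n'':ℝ)+2) * (((n'':ℝ)+1)) * w^2)) * ((n''.choose r : ℝ) * w ^ r) := by
      intro r _
      have h1 := succ_choose_cast (n''+1) (r+1)
      have h2 := succ_choose_cast n'' r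
      push_cast at h1 h2
      push_cast
      linear_combination (w^(r+2) * ((r:ℝ)+1)) * h1 + (w^(r+2) * ((n'':ℝ)+2)) * h2
    rw [Finset.sum_range_succ', Finset.sum_range_succ', sum_congr rfl e1, ← mul_sum, B0]
    push_cast
    ring

lemma Jaux (N k : ℕ) (hk : k ≤ N) (g : ℕ → ℝ) (w : ℝ) :
    ∑ j ∈ range (N+1), g j * (N.choose j : ℝ) * (j.choose k : ℝ) * w^j
      = (N.choose k : ℝ) * w^k * ∑ r ∈ range (N-k+1), g (k+r) * ((N-k).choose r : ℝ) * w^r := by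
  have h1 : ∑ j ∈ Ico k (N+1), g j * (N.choose j : ℝ) * (j.choose k : ℝ) * w^j
      = ∑ j ∈ range (N+1), g j * (N.choose j : ℝ) * (j.choose k : ℝ) * w^j := by
    refine sum_subset (fun j hj => ?_) (fun j hj hj2 => ?_)
    · rw [mem_range]; exact (mem_Ico.mp hj).2
    · have hj1 := mem_range.mp hj
      have hjk : j < k := by
        by_contra h
        exact hj2 (mem_Ico.mpr ⟨by omega, hj1⟩)
      rw [Nat.choose_eq_zero_of_lt hjk]
      simp
  rw [← h1, Finset.sum_Ico_eq_sum_range, show N+1-k = N-k+1 from by omega, mul_sum]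
  refine sum_congr rfl fun r hr => ?_
  have hr' : r ≤ N - k := by have := mem_range.mp hr; omega
  have hcm : (N.choose (k+r) : ℝ) * ((k+r).choose k : ℝ) = (N.choose k : ℝ) * ((N-k).choose r : ℝ) := by
    have := Nat.choose_mul (n := N) (k := k+r) (s := k) (by omega)
    have h2 := congrArg (Nat.cast (R := ℝ)) this
    push_cast at h2
    rw [h2, Nat.add_sub_cancel_left]
  rw [pow_add]
  linear_combination (g (k+r) * (w^k * w^r)) * hcm

lemma Jaux1 (N k : ℕ) (hk : k ≤ N) (w : ℝ) :
    ∑ j ∈ range (N+1), (j:ℝ) * (N.choose j : ℝ) * (j.choose k : ℝ) * w^j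
      = (N.choose k : ℝ) * w^k * ∑ r ∈ range (N-k+1), ((k+r:ℕ):ℝ) * ((N-k).choose r : ℝ) * w^r :=
  Jaux N k hk (fun j : ℕ => (j:ℝ)) w

lemma Jaux2 (N k : ℕ) (hk : k ≤ N) (w : ℝ) :
    ∑ j ∈ range (N+1), (j:ℝ)^2 * (N.choose j : ℝ) * (j.choose k : ℝ) * w^j
      = (N.choose k : ℝ) * w^k * ∑ r ∈ range (N-k+1), ((k+r:ℕ):ℝ)^2 * ((N-k).choose r : ℝ) * w^r :=
  Jaux N k hk (fun j : ℕ => (j:ℝ)^2) w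

lemma S1_eq (N : ℕ) (p : ℝ) (hp : p ≠ 0) (hq : (1:ℝ)-p ≠ 0) (x : ℕ) (hx : x ≤ N) :
    ∑ j ∈ range (N+1), (j:ℝ) * (N.choose j : ℝ) * (p/(1-p))^j * krawtchouk N p j x
      = (if x = 0 then (N:ℝ)*p else if x = 1 then -(1-p) else 0) * (1/(1-p))^N := by
  set q : ℝ := 1 - p with hqdef
  simp only [kraw_formula N p hp]
  have step1 : ∀ j ∈ range (N+1), (j:ℝ) * (N.choose j : ℝ) * (p/q)^j *
      (∑ k ∈ range (N+1), (-1:ℝ)^k * (j.choose k : ℝ) * (x.choose k : ℝ) / (N.choose k : ℝ) * (1/p)^k)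
      = ∑ k ∈ range (N+1), ((-1:ℝ)^k * (x.choose k : ℝ) / (N.choose k : ℝ) * (1/p)^k) *
          ((j:ℝ) * (N.choose j : ℝ) * (j.choose k : ℝ) * (p/q)^j) := by
    intro j _
    rw [mul_sum]
    exact sum_congr rfl fun k _ => by ring
  rw [sum_congr rfl step1, Finset.sum_comm]
  have step2 : ∀ k ∈ range (N+1),
      ∑ j ∈ range (N+1), ((-1:ℝ)^k * (x.choose k : ℝ) / (N.choose k : ℝ) * (1/p)^k) *
          ((j:ℝ) * (N.choose j : ℝ) * (j.choose k : ℝ) * (p/q)^j)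
      = (-1:ℝ)^k * (x.choose k : ℝ) * (((k:ℝ) + ((N:ℝ)-(k:ℝ))*p) * (1/q)^N) := by
    intro k hk
    have hkN : k ≤ N := by have := mem_range.mp hk; omega
    rw [← mul_sum, Jaux1 N k hkN (p/q)]
    have inner : ∑ r ∈ range (N-k+1), ((k+r:ℕ):ℝ) * ((N-k).choose r : ℝ) * (p/q)^r
        = (k:ℝ)*(1+p/q)^(N-k) + ((N-k:ℕ):ℝ)*(p/q)*(1+p/q)^(N-k-1) := by
      have e : ∀ r ∈ range (N-k+1), ((k+r:ℕ):ℝ) * ((N-k).choose r : ℝ) * (p/q)^r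
          = (k:ℝ) * (((N-k).choose r : ℝ) * (p/q)^r) + (r:ℝ) * ((N-k).choose r : ℝ) * (p/q)^r := by
        intro r _
        push_cast
        ring
      rw [sum_congr rfl e, sum_add_distrib, ← mul_sum, B0, B1]
    rw [inner]
    have hv : 1 + p/q = 1/q := by
      rw [hqdef]
      field_simp [show (1:ℝ)-p ≠ 0 from hq]
      ring
    rw [hv]
    have hC : (N.choose k : ℝ) ≠ 0 := Nat.cast_ne_zero.mpr (Nat.choose_pos hkN).ne'
    have hq1 : (1/p:ℝ)^k * (p/q)^k = (1/q)^k := by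
      rw [← mul_pow]
      congr 1
      field_simp
    rcases eq_or_lt_of_le hkN with heq | hlt
    · subst heq
      simp only [Nat.sub_self, Nat.cast_zero, pow_zero, Nat.choose_self, Nat.cast_one, zero_mul,
        mul_one, add_zero, sub_self]
      linear_combination ((-1:ℝ)^k * (x.choose k : ℝ) * (k:ℝ)) * hq1
    · have hNk : ((N-k:ℕ):ℝ) = (N:ℝ)-(k:ℝ) := by push_cast [Nat.cast_sub hkN]; ring
      have hp1 : (1/q:ℝ)^k * (1/q)^(N-k) = (1/q)^N := by rw [← pow_add]; congr 1; omega
      have hp2 : (1/q:ℝ)^k * ((1/q) * (1/q)^(N-k-1)) = (1/q)^N := by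
        rw [← pow_succ', ← pow_add]
        congr 1
        omega
      have hdiv : (-1:ℝ)^k * (x.choose k : ℝ) / (N.choose k : ℝ) * (1/p)^k *
          ((N.choose k : ℝ) * (p/q)^k * ((k:ℝ)*(1/q)^(N-k) + ((N-k:ℕ):ℝ)*(p/q)*(1/q)^(N-k-1)))
          = (-1:ℝ)^k * (x.choose k : ℝ) * ((1/p)^k * (p/q)^k) *
            ((k:ℝ)*(1/q)^(N-k) + ((N-k:ℕ):ℝ)*(p*(1/q))*(1/q)^(N-k-1)) := by
        field_simp
      rw [hdiv, hq1, hNk]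
      linear_combination ((-1:ℝ)^k * (x.choose k : ℝ) * (k:ℝ)) * hp1 +
        ((-1:ℝ)^k * (x.choose k : ℝ) * ((N:ℝ)-(k:ℝ)) * p) * hp2
  rw [sum_congr rfl step2]
  have split : ∀ k ∈ range (N+1), (-1:ℝ)^k * (x.choose k:ℝ) * (((k:ℝ) + ((N:ℝ)-(k:ℝ))*p) * (1/q)^N)
      = ((1-p)*(1/q)^N) * ((-1:ℝ)^k * (k:ℝ) * (x.choose k:ℝ))
        + ((N:ℝ)*p*(1/q)^N) * ((-1:ℝ)^k * (x.choose k:ℝ)) := by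
    intro k _
    ring
  rw [sum_congr rfl split, sum_add_distrib, ← mul_sum, ← mul_sum, alt1 N x hx, alt0 N x hx]
  split_ifs <;> first | ring1 | (exfalso; omega)

lemma S2_eq (N : ℕ) (p : ℝ) (hp : p ≠ 0) (hq : (1:ℝ)-p ≠ 0) (x : ℕ) (hx : x ≤ N) :
    ∑ j ∈ range (N+1), (j:ℝ)^2 * (N.choose j : ℝ) * (p/(1-p))^j * krawtchouk N p j x
      = (if x = 0 then (N:ℝ)*p + (N:ℝ)*((N:ℝ)-1)*p^2
         else if x = 1 then -(1 + (2*(N:ℝ)-3)*p - (2*(N:ℝ)-2)*p^2)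
         else if x = 2 then 2*(1-p)^2 else 0) * (1/(1-p))^N := by
  set q : ℝ := 1 - p with hqdef
  simp only [kraw_formula N p hp]
  have step1 : ∀ j ∈ range (N+1), (j:ℝ)^2 * (N.choose j : ℝ) * (p/q)^j *
      (∑ k ∈ range (N+1), (-1:ℝ)^k * (j.choose k : ℝ) * (x.choose k : ℝ) / (N.choose k : ℝ) * (1/p)^k)
      = ∑ k ∈ range (N+1), ((-1:ℝ)^k * (x.choose k : ℝ) / (N.choose k : ℝ) * (1/p)^k) *
          ((j:ℝ)^2 * (N.choose j : ℝ) * (j.choose k : ℝ) * (p/q)^j) := by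
    intro j _
    rw [mul_sum]
    exact sum_congr rfl fun k _ => by ring
  rw [sum_congr rfl step1, Finset.sum_comm]
  have step2 : ∀ k ∈ range (N+1),
      ∑ j ∈ range (N+1), ((-1:ℝ)^k * (x.choose k : ℝ) / (N.choose k : ℝ) * (1/p)^k) *
          ((j:ℝ)^2 * (N.choose j : ℝ) * (j.choose k : ℝ) * (p/q)^j)
      = (-1:ℝ)^k * (x.choose k : ℝ) *
          (((k:ℝ)^2 + (2*(k:ℝ)+1)*((N:ℝ)-(k:ℝ))*p + ((N:ℝ)-(k:ℝ))*(((N:ℝ)-(k:ℝ))-1)*p^2) * (1/q)^N) := by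
    intro k hk
    have hkN : k ≤ N := by have := mem_range.mp hk; omega
    rw [← mul_sum, Jaux2 N k hkN (p/q)]
    have inner : ∑ r ∈ range (N-k+1), ((k+r:ℕ):ℝ)^2 * ((N-k).choose r : ℝ) * (p/q)^r
        = (k:ℝ)^2*(1+p/q)^(N-k) + (2*(k:ℝ)+1)*(((N-k:ℕ):ℝ)*(p/q)*(1+p/q)^(N-k-1))
          + ((N-k:ℕ):ℝ)*(((N-k:ℕ):ℝ)-1)*(p/q)^2*(1+p/q)^(N-k-2) := by
      have e : ∀ r ∈ range (N-k+1), ((k+r:ℕ):ℝ)^2 * ((N-k).choose r : ℝ) * (p/q)^r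
          = (k:ℝ)^2 * (((N-k).choose r : ℝ) * (p/q)^r)
            + (2*(k:ℝ)+1) * ((r:ℝ) * ((N-k).choose r : ℝ) * (p/q)^r)
            + ((r:ℝ) * ((r:ℝ)-1)) * ((N-k).choose r : ℝ) * (p/q)^r := by
        intro r _
        push_cast
        ring
      rw [sum_congr rfl e, sum_add_distrib, sum_add_distrib, ← mul_sum, ← mul_sum, B0, B1, B2]
    rw [inner]
    have hv : 1 + p/q = 1/q := by
      rw [hqdef]
      field_simp [show (1:ℝ)-p ≠ 0 from hq]
      ring
    rw [hv]
    have hC : (N.choose k : ℝ) ≠ 0 := Nat.cast_ne_zero.mpr (Nat.choose_pos hkN).ne'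
    have hq1 : (1/p:ℝ)^k * (p/q)^k = (1/q)^k := by
      rw [← mul_pow]
      congr 1
      field_simp
    rcases eq_or_lt_of_le hkN with heq | hlt
    · subst heq
      simp only [Nat.sub_self, Nat.cast_zero, pow_zero, Nat.choose_self, Nat.cast_one, zero_mul,
        mul_one, add_zero, sub_self, mul_zero, zero_sub]
      linear_combination ((-1:ℝ)^k * (x.choose k : ℝ) * (k:ℝ)^2) * hq1
    · rcases eq_or_lt_of_le (Nat.succ_le_of_lt hlt) with heq2 | hlt2
      · -- N = k + 1
        have hNe : N = k + 1 := heq2.symm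
        subst hNe
        simp only [Nat.add_sub_cancel_left, Nat.cast_one, sub_self, mul_zero, zero_mul, add_zero]
        push_cast
        field_simp
        have hpp : p^k * p⁻¹^k = (1:ℝ) := by rw [← mul_pow, mul_inv_cancel₀ hp, one_pow]
        have hqq : q * q⁻¹ = (1:ℝ) := mul_inv_cancel₀ hq
        linear_combination ((x.choose k:ℝ) * q⁻¹^k * (p + 2*p*k + k^2)) * hpp
          - ((x.choose k:ℝ) * q⁻¹^k * (p + 2*p*k + k^2)) * hqq
      · -- k + 2 ≤ N
        have hNk : ((N-k:ℕ):ℝ) = (N:ℝ)-(k:ℝ) := by push_cast [Nat.cast_sub hkN]; ring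
        have hp1 : (1/q:ℝ)^k * (1/q)^(N-k) = (1/q)^N := by rw [← pow_add]; congr 1; omega
        have hp2 : (1/q:ℝ)^k * ((1/q) * (1/q)^(N-k-1)) = (1/q)^N := by
          rw [← pow_succ', ← pow_add]
          congr 1
          omega
        have hp3 : (1/q:ℝ)^k * ((1/q)^2 * (1/q)^(N-k-2)) = (1/q)^N := by
          rw [← pow_add, ← pow_add]
          congr 1
          omega
        have hdiv : (-1:ℝ)^k * (x.choose k : ℝ) / (N.choose k : ℝ) * (1/p)^k *
            ((N.choose k : ℝ) * (p/q)^k *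
              ((k:ℝ)^2*(1/q)^(N-k) + (2*(k:ℝ)+1)*(((N-k:ℕ):ℝ)*(p/q)*(1/q)^(N-k-1))
                + ((N-k:ℕ):ℝ)*(((N-k:ℕ):ℝ)-1)*(p/q)^2*(1/q)^(N-k-2)))
            = (-1:ℝ)^k * (x.choose k : ℝ) * ((1/p)^k * (p/q)^k) *
              ((k:ℝ)^2*(1/q)^(N-k)
                + (2*(k:ℝ)+1)*(((N-k:ℕ):ℝ)*p)*((1/q) * (1/q)^(N-k-1))
                + (((N-k:ℕ):ℝ)*(((N-k:ℕ):ℝ)-1)*p^2)*((1/q)^2 * (1/q)^(N-k-2))) := by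
          field_simp
        rw [hdiv, hq1, hNk]
        linear_combination ((-1:ℝ)^k * (x.choose k : ℝ) * (k:ℝ)^2) * hp1 +
          ((-1:ℝ)^k * (x.choose k : ℝ) * (2*(k:ℝ)+1) * (((N:ℝ)-(k:ℝ))*p)) * hp2 +
          ((-1:ℝ)^k * (x.choose k : ℝ) * (((N:ℝ)-(k:ℝ))*(((N:ℝ)-(k:ℝ))-1)*p^2)) * hp3
  rw [sum_congr rfl step2]
  have split : ∀ k ∈ range (N+1),
      (-1:ℝ)^k * (x.choose k:ℝ) *
          (((k:ℝ)^2 + (2*(k:ℝ)+1)*((N:ℝ)-(k:ℝ))*p + ((N:ℝ)-(k:ℝ))*(((N:ℝ)-(k:ℝ))-1)*p^2) * (1/q)^N)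
      = (((1-p)^2)*(1/q)^N) * ((-1:ℝ)^k * ((k:ℝ) * ((k:ℝ)-1)) * (x.choose k:ℝ))
        + ((1 + (2*(N:ℝ)-3)*p - (2*(N:ℝ)-2)*p^2)*(1/q)^N) * ((-1:ℝ)^k * (k:ℝ) * (x.choose k:ℝ))
        + (((N:ℝ)*p + (N:ℝ)*((N:ℝ)-1)*p^2)*(1/q)^N) * ((-1:ℝ)^k * (x.choose k:ℝ)) := by
    intro k _
    ring
  rw [sum_congr rfl split, sum_add_distrib, sum_add_distrib, ← mul_sum, ← mul_sum, ← mul_sum,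
    alt2 N x hx, alt1 N x hx, alt0 N x hx]
  split_ifs <;> first | ring1 | (exfalso; omega)

lemma kraw_zero (N : ℕ) (p : ℝ) (hp : p ≠ 0) (i : ℕ) : krawtchouk N p i 0 = 1 := by
  rw [kraw_formula N p hp]
  rw [Finset.sum_eq_single 0]
  · norm_num
  · intro k _ hk
    match k, hk with
    | (k+1), _ => rw [Nat.choose_eq_zero_of_lt (n := 0) (by omega)]; simp
  · intro h
    exact absurd (mem_range.mpr (by omega)) h

lemma kraw_one (N : ℕ) (p : ℝ) (hp : p ≠ 0) (hN : 1 ≤ N) (i : ℕ) :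
    (N:ℝ) * p * krawtchouk N p i 1 = (N:ℝ)*p - (i:ℝ) := by
  rw [kraw_formula N p hp]
  rw [sum_trunc N 2 _ ?_ ?_]
  · rw [Finset.sum_range_succ, Finset.sum_range_one]
    have hN0 : (N:ℝ) ≠ 0 := Nat.cast_ne_zero.mpr (by omega)
    norm_num [Nat.choose_one_right]
    field_simp
    ring
  · intro k hk _
    rw [Nat.choose_eq_zero_of_lt (n := 1) (by omega)]
    simp
  · intro k hk
    rw [Nat.choose_eq_zero_of_lt (n := 1) (by omega)]
    simp

lemma kraw_two (N : ℕ) (p : ℝ) (hp : p ≠ 0) (hN : 2 ≤ N) (i : ℕ) :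
    (N:ℝ)*((N:ℝ)-1)*p^2 * krawtchouk N p i 2
      = (N:ℝ)*((N:ℝ)-1)*p^2 - 2*((N:ℝ)-1)*p*(i:ℝ) + (i:ℝ)*((i:ℝ)-1) := by
  rw [kraw_formula N p hp]
  rw [sum_trunc N 3 _ ?_ ?_]
  · rw [Finset.sum_range_succ, Finset.sum_range_succ, Finset.sum_range_one]
    have hN0 : (N:ℝ) ≠ 0 := Nat.cast_ne_zero.mpr (by omega)
    have hN1 : (N:ℝ)-1 ≠ 0 := by
      have : (2:ℝ) ≤ (N:ℝ) := by exact_mod_cast hN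
      intro h
      nlinarith
    have hc2 : (N.choose 2 : ℝ) = (N:ℝ)*((N:ℝ)-1)/2 := Nat.cast_choose_two ℝ N
    have hi2 : (i.choose 2 : ℝ) = (i:ℝ)*((i:ℝ)-1)/2 := Nat.cast_choose_two ℝ i
    norm_num [Nat.choose_one_right, hc2, hi2]
    field_simp
    ring
  · intro k hk _
    rw [Nat.choose_eq_zero_of_lt (n := 2) (by omega)]
    simp
  · intro k hk
    rw [Nat.choose_eq_zero_of_lt (n := 2) (by omega)]
    simp

lemma Mom1 (N : ℕ) (lam α β : ℝ) (p : ℝ) (hp : p ≠ 0) (hq : (1:ℝ)-p ≠ 0)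
    (i : ℕ) (hi : i ≤ N) (t : ℝ) :
    ∑ j ∈ range (N+1), (j:ℝ) * ehrenfestP N p (1-p) lam α β i j t
      = (N:ℝ)*p - ((N:ℝ)*p - (i:ℝ)) * Real.exp (-(lam*(α+β)*t)) := by
  unfold ehrenfestP
  have swap : ∀ j ∈ range (N+1), (j:ℝ) * ((N.choose j : ℝ) * (p/(1-p))^j *
      ∑ x ∈ range (N+1), (N.choose x : ℝ) * p^x * (1-p)^(N-x) * krawtchouk N p i x *
        krawtchouk N p j x * Real.exp (-(lam*(α+β)*(x:ℝ)*t)))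
      = ∑ x ∈ range (N+1), ((N.choose x : ℝ) * p^x * (1-p)^(N-x) * krawtchouk N p i x *
          Real.exp (-(lam*(α+β)*(x:ℝ)*t))) * ((j:ℝ) * (N.choose j : ℝ) * (p/(1-p))^j * krawtchouk N p j x) := by
    intro j _
    rw [mul_sum, mul_sum]
    exact sum_congr rfl fun x _ => by ring
  rw [sum_congr rfl swap, Finset.sum_comm]
  have step : ∀ x ∈ range (N+1),
      ∑ j ∈ range (N+1), ((N.choose x : ℝ) * p^x * (1-p)^(N-x) * krawtchouk N p i x *
          Real.exp (-(lam*(α+β)*(x:ℝ)*t))) * ((j:ℝ) * (N.choose j : ℝ) * (p/(1-p))^j * krawtchouk N p j x)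
      = (fun x => (N.choose x : ℝ) * p^x * (1-p)^(N-x) * krawtchouk N p i x *
          Real.exp (-(lam*(α+β)*(x:ℝ)*t)) *
          ((if x = 0 then (N:ℝ)*p else if x = 1 then -(1-p) else 0) * (1/(1-p))^N)) x := by
    intro x hx
    have hxN : x ≤ N := by have := mem_range.mp hx; omega
    rw [← mul_sum, S1_eq N p hp hq x hxN]
  rw [sum_congr rfl step, sum_trunc N 2 _ ?_ ?_]
  · rw [Finset.sum_range_succ, Finset.sum_range_one]
    norm_num [kraw_zero N p hp]
    have hone : ((1:ℝ)-p)^N * (1/(1-p))^N = 1 := by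
      rw [← mul_pow, mul_one_div_cancel hq, one_pow]
    cases N with
    | zero =>
      interval_cases i
      norm_num
    | succ N' =>
      have hkra := kraw_one (N'+1) p hp (by omega) i
      have hone2 : ((1:ℝ)-p)^(N'+1-1) * (1-p) * (1/(1-p))^(N'+1) = 1 := by
        rw [show N'+1-1 = N' from rfl, ← pow_succ, ← mul_pow, mul_one_div_cancel hq, one_pow]
      push_cast
      push_cast at hkra
      have hinv : ((1:ℝ)-p)^(N'+1) * (((1-p)^(N'+1))⁻¹) = 1 := mul_inv_cancel₀ (pow_ne_zero _ hq)
      linear_combination (((N':ℝ)+1)*p - ((N':ℝ)+1)*p*krawtchouk (N'+1) p i 1 *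
          Real.exp (-(lam*(α+β)*t))) * hinv - Real.exp (-(lam*(α+β)*t)) * hkra
  · intro x hx _
    rw [if_neg (by omega), if_neg (by omega)]
    simp
  · intro x hx
    rw [Nat.choose_eq_zero_of_lt (by omega)]
    simp

lemma Mom2 (N : ℕ) (lam α β : ℝ) (p : ℝ) (hp : p ≠ 0) (hq : (1:ℝ)-p ≠ 0)
    (i : ℕ) (hi : i ≤ N) (t : ℝ) :
    ∑ j ∈ range (N+1), (j:ℝ)^2 * ehrenfestP N p (1-p) lam α β i j t
      = (N:ℝ)*p + (N:ℝ)*((N:ℝ)-1)*p^2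
        - (1 + 2*((N:ℝ)-1)*p) * ((N:ℝ)*p - (i:ℝ)) * Real.exp (-(lam*(α+β)*t))
        + ((N:ℝ)*((N:ℝ)-1)*p^2 - 2*((N:ℝ)-1)*p*(i:ℝ) + (i:ℝ)*((i:ℝ)-1)) *
            Real.exp (-(lam*(α+β)*t))^2 := by
  unfold ehrenfestP
  have swap : ∀ j ∈ range (N+1), (j:ℝ)^2 * ((N.choose j : ℝ) * (p/(1-p))^j *
      ∑ x ∈ range (N+1), (N.choose x : ℝ) * p^x * (1-p)^(N-x) * krawtchouk N p i x *
        krawtchouk N p j x * Real.exp (-(lam*(α+β)*(x:ℝ)*t)))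
      = ∑ x ∈ range (N+1), ((N.choose x : ℝ) * p^x * (1-p)^(N-x) * krawtchouk N p i x *
          Real.exp (-(lam*(α+β)*(x:ℝ)*t))) * ((j:ℝ)^2 * (N.choose j : ℝ) * (p/(1-p))^j * krawtchouk N p j x) := by
    intro j _
    rw [mul_sum, mul_sum]
    exact sum_congr rfl fun x _ => by ring
  rw [sum_congr rfl swap, Finset.sum_comm]
  have step : ∀ x ∈ range (N+1),
      ∑ j ∈ range (N+1), ((N.choose x : ℝ) * p^x * (1-p)^(N-x) * krawtchouk N p i x *
          Real.exp (-(lam*(α+β)*(x:ℝ)*t))) * ((j:ℝ)^2 * (N.choose j : ℝ) * (p/(1-p))^j * krawtchouk N p j x)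
      = (fun x => (N.choose x : ℝ) * p^x * (1-p)^(N-x) * krawtchouk N p i x *
          Real.exp (-(lam*(α+β)*(x:ℝ)*t)) *
          ((if x = 0 then (N:ℝ)*p + (N:ℝ)*((N:ℝ)-1)*p^2
            else if x = 1 then -(1 + (2*(N:ℝ)-3)*p - (2*(N:ℝ)-2)*p^2)
            else if x = 2 then 2*(1-p)^2 else 0) * (1/(1-p))^N)) x := by
    intro x hx
    have hxN : x ≤ N := by have := mem_range.mp hx; omega
    rw [← mul_sum, S2_eq N p hp hq x hxN]
  rw [sum_congr rfl step, sum_trunc N 3 _ ?_ ?_]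
  · rw [Finset.sum_range_succ, Finset.sum_range_succ, Finset.sum_range_one]
    have hE2 : Real.exp (-(lam*(α+β)*(2:ℝ)*t)) = Real.exp (-(lam*(α+β)*t))^2 := by
      rw [sq, ← Real.exp_add]
      congr 1
      ring
    match N, hi with
    | 0, hi =>
      interval_cases i
      norm_num
    | 1, hi =>
      have hkra := kraw_one 1 p hp (by omega) i
      norm_num [kraw_zero 1 p hp]
      push_cast at hkra ⊢
      have hinv : ((1:ℝ)-p) * ((1-p))⁻¹ = 1 := mul_inv_cancel₀ hq
      have hii : (i:ℝ) * ((i:ℝ)-1) = 0 := by interval_cases i <;> norm_num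
      linear_combination (p - p * krawtchouk 1 p i 1 * Real.exp (-(lam*(α+β)*t))) * hinv
        - Real.exp (-(lam*(α+β)*t)) * hkra - Real.exp (-(lam*(α+β)*t))^2 * hii
    | (N''+2), hi =>
      have hkra1 := kraw_one (N''+2) p hp (by omega) i
      have hkra2 := kraw_two (N''+2) p hp (by omega) i
      norm_num [kraw_zero (N''+2) p hp, Nat.cast_choose_two ℝ]
      push_cast at hkra1 hkra2 ⊢
      rw [hE2]
      have hinv : ((1:ℝ)-p)^(N''+2) * (((1-p)^(N''+2))⁻¹) = 1 := mul_inv_cancel₀ (pow_ne_zero _ hq)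
      linear_combination
        (((N'':ℝ)+2)*p + ((N'':ℝ)+2)*((N'':ℝ)+1)*p^2
          - ((N'':ℝ)+2)*p*krawtchouk (N''+2) p i 1 * Real.exp (-(lam*(α+β)*t)) * (1+2*((N'':ℝ)+1)*p)
          + ((N'':ℝ)+2)*((N'':ℝ)+1)*p^2*krawtchouk (N''+2) p i 2 * Real.exp (-(lam*(α+β)*t))^2) * hinv
        - (1+2*((N'':ℝ)+1)*p) * Real.exp (-(lam*(α+β)*t)) * hkra1
        + Real.exp (-(lam*(α+β)*t))^2 * hkra2
  · intro x hx _
    rw [if_neg (by omega), if_neg (by omega), if_neg (by omega)]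
    simp
  · intro x hx
    rw [Nat.choose_eq_zero_of_lt (by omega)]
    simp

/-- Conditional variance of the Ehrenfest process. -/
theorem ehrenfest_conditional_variance (N : ℕ) (lam α β : ℝ) (hlam : 0 < lam)
    (hα : α ∈ Set.Ioc (0 : ℝ) 1) (hβ : β ∈ Set.Ioc (0 : ℝ) 1)
    (p q : ℝ) (hp : p = α / (α + β)) (hq : q = 1 - p)
    (i : ℕ) (hi : i ≤ N) (t : ℝ) (ht : 0 ≤ t) :
    ∑ j ∈ Finset.range (N + 1), (j : ℝ) ^ 2 * ehrenfestP N p q lam α β i j t -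
        (∑ j ∈ Finset.range (N + 1), (j : ℝ) * ehrenfestP N p q lam α β i j t) ^ 2 =
      (N : ℝ) * p * q +
        (2 * p - 1) * ((N : ℝ) * p - (i : ℝ)) * Real.exp (-(lam * (α + β) * t)) -
        (((N : ℝ) - (i : ℝ)) * p ^ 2 + (i : ℝ) * q ^ 2) *
          Real.exp (-(2 * lam * (α + β) * t)) := by
  obtain ⟨hα0, hα1⟩ := hα
  obtain ⟨hβ0, hβ1⟩ := hβ
  have hab : (0:ℝ) < α + β := by linarith
  have hp0 : 0 < p := by rw [hp]; positivity
  have hp1 : p < 1 := by rw [hp, div_lt_one hab]; linarith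
  have hpne : p ≠ 0 := ne_of_gt hp0
  have hqne : (1:ℝ) - p ≠ 0 := ne_of_gt (by linarith)
  rw [hq]
  rw [Mom1 N lam α β p hpne hqne i hi t, Mom2 N lam α β p hpne hqne i hi t]
  have hE2 : Real.exp (-(2*lam*(α+β)*t)) = Real.exp (-(lam*(α+β)*t))^2 := by
    rw [sq, ← Real.exp_add]
    congr 1
    ring
  rw [hE2]
  ring
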